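/- Let A be a unital ring with sr(A) = n < ∞ and er(A) < n, and let 0 → I → B → A → 0 be a unital extension. Suppose I has a local unit (g_i) consisting of idempotents such that sr(g_i I g_i) ≤ n and er(g_i I g_i) < n for all i. Then sr(B) = n and er(B) < n. -/

import Mathlib

open scoped BigOperators

variable {R : Type*}

/-- A column is unimodular if its entries admit a left Bezout relation summing to `1`. -/
def Unimodular [Ring R] {m : ℕ} (b : Fin m → R) : Prop :=
  ∃ a : Fin m → R, ∑ i, a i * b i = 1

/-- An `(n+1)`-column is reducible if adding left multiples of the last entry to the first
`n` entries yields a unimodular `n`-column. -/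
def Reducible [Ring R] {n : ℕ} (b : Fin (n + 1) → R) : Prop :=
  ∃ v : Fin n → R, Unimodular (fun i : Fin n => b i.castSucc + v i * b (Fin.last n))

/-- The stable range condition: every unimodular column of length `> n` is reducible. -/
def SRleq (R : Type*) [Ring R] (n : ℕ) : Prop :=
  ∀ m : ℕ, n ≤ m → ∀ b : Fin (m + 1) → R, Unimodular b → Reducible b

/-- The Bass stable rank, as an element of `ℕ∞`. -/
noncomputable def sr (R : Type*) [Ring R] : ℕ∞ :=
  sInf {c : ℕ∞ | ∃ n : ℕ, c = n ∧ SRleq R n}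

/-- Elementary matrices (transvections). -/
def IsElemMat [Ring R] {t : ℕ} (M : Matrix (Fin t) (Fin t) R) : Prop :=
  ∃ (i j : Fin t) (c : R), i ≠ j ∧ M = 1 + Matrix.single i j c

/-- `ERleq R k` : for every `t ≥ k + 1`, the elementary group `E_t(R)` acts transitively on
unimodular `t`-columns. -/
def ERleq (R : Type*) [Ring R] (k : ℕ) : Prop :=
  ∀ t : ℕ, k + 1 ≤ t → ∀ b c : Fin t → R, Unimodular b → Unimodular c →
    ∃ L : List (Matrix (Fin t) (Fin t) R), (∀ M ∈ L, IsElemMat M) ∧ L.prod.mulVec b = c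

/-- The elementary rank, as an element of `ℕ∞`. -/
noncomputable def er (R : Type*) [Ring R] : ℕ∞ :=
  sInf {c : ℕ∞ | ∃ k : ℕ, c = k ∧ ERleq R k}

/-- Vaserstein's `I`-unimodular columns relative to a two-sided ideal `I` of `R`:
the first entry is congruent to `1` mod `I`, the others lie in `I`, and there is a Bezout
relation of the same shape. -/
def RelUnimodular [Ring R] (I : TwoSidedIdeal R) {m : ℕ} (b : Fin (m + 1) → R) : Prop :=
  b 0 - 1 ∈ I ∧ (∀ i, i ≠ 0 → b i ∈ I) ∧
    ∃ a : Fin (m + 1) → R, (a 0 - 1 ∈ I) ∧ (∀ i, i ≠ 0 → a i ∈ I) ∧ ∑ i, a i * b i = 1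

def RelReducible [Ring R] (I : TwoSidedIdeal R) {m : ℕ} (b : Fin (m + 2) → R) : Prop :=
  ∃ v : Fin (m + 1) → R, (∀ i, v i ∈ I) ∧
    RelUnimodular I (fun i : Fin (m + 1) => b i.castSucc + v i * b (Fin.last (m + 1)))

/-- Relative (Vaserstein) stable rank `≤ n` for a two-sided ideal: every `I`-unimodular
column of length at least `n + 1` is reducible. -/
def RelSRleq [Ring R] (I : TwoSidedIdeal R) (n : ℕ) : Prop :=
  ∀ m : ℕ, n ≤ m + 1 → ∀ b : Fin (m + 2) → R, RelUnimodular I b → RelReducible I b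

/-- The relative stable rank of a two-sided ideal, as an element of `ℕ∞`. -/
noncomputable def relSr [Ring R] (I : TwoSidedIdeal R) : ℕ∞ :=
  sInf {c : ℕ∞ | ∃ n : ℕ, c = n ∧ RelSRleq I n}

/-- A local unit on a subset `S` of a ring: an increasing net of idempotents contained in `S`
which act as a unit on every element of `S`. -/
structure LocalUnit {R : Type*} [NonUnitalRing R] (S : Set R) where
  ι : Type
  [pre : Preorder ι]
  directed : ∀ i j : ι, ∃ k, i ≤ k ∧ j ≤ k
  e : ι → R
  mem : ∀ i, e i ∈ S
  idem : ∀ i, e i * e i = e i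
  incr : ∀ i j, i ≤ j → e i * e j = e i ∧ e j * e i = e i
  unit : ∀ a ∈ S, ∃ i, a * e i = a ∧ e i * a = a

/-- The corner `g·R·g` of a ring `R` at `g`, realized as the set of elements fixed by
`x ↦ g * x * g`. -/
def Corner {B : Type*} [Ring B] (g : B) : Type _ := {x : B // g * x * g = x}

/-- For an idempotent `g`, the corner `g·B·g` is a unital ring with identity `g`. -/
def cornerRing {B : Type*} [Ring B] {g : B} (hg : g * g = g) : Ring (Corner g) := by
  have lmul : ∀ x : B, g * x * g = x → g * x = x := by
    intro x hx
    conv_lhs => rw [← hx]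
    rw [← mul_assoc, ← mul_assoc, hg, hx]
  have rmul : ∀ x : B, g * x * g = x → x * g = x := by
    intro x hx
    conv_lhs => rw [← hx]
    rw [mul_assoc, mul_assoc, hg, ← mul_assoc, hx]
  letI : Zero (Corner g) := ⟨⟨0, by simp⟩⟩
  letI : One (Corner g) := ⟨⟨g, by rw [hg, hg]⟩⟩
  letI : Add (Corner g) := ⟨fun x y => ⟨x.1 + y.1, by rw [mul_add, add_mul, x.2, y.2]⟩⟩
  letI : Neg (Corner g) := ⟨fun x => ⟨-x.1, by rw [mul_neg, neg_mul, x.2]⟩⟩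
  letI : Mul (Corner g) := ⟨fun x y => ⟨x.1 * y.1, by
    have h : g * (x.1 * y.1) * g = (g * x.1) * (y.1 * g) := by
      rw [← mul_assoc, mul_assoc (g * x.1)]
    rw [h, lmul x.1 x.2, rmul y.1 y.2]⟩⟩
  exact Ring.ofMinimalAxioms
    (fun a b c => Subtype.ext (add_assoc a.1 b.1 c.1))
    (fun a => Subtype.ext (zero_add a.1))
    (fun a => Subtype.ext (neg_add_cancel a.1))
    (fun a b c => Subtype.ext (mul_assoc a.1 b.1 c.1))
    (fun a => Subtype.ext (lmul a.1 a.2))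
    (fun a => Subtype.ext (rmul a.1 a.2))
    (fun a b c => Subtype.ext (mul_add a.1 b.1 c.1))
    (fun a b c => Subtype.ext (add_mul a.1 b.1 c.1))

section Aux
variable {R : Type*} [Ring R]

lemma unimodular_e1 {t : ℕ} : Unimodular (fun i : Fin (t+1) => if i = 0 then (1:R) else 0) := by
  refine ⟨fun i => if i = 0 then 1 else 0, ?_⟩
  rw [Finset.sum_eq_single 0] <;> simp +contextual

lemma unimodular_mulVec {t : ℕ} {P Q : Matrix (Fin t) (Fin t) R} (hQP : Q * P = 1)
    {b : Fin t → R} (hb : Unimodular b) : Unimodular (P.mulVec b) := by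
  obtain ⟨a, ha⟩ := hb
  refine ⟨Matrix.vecMul a Q, ?_⟩
  have : dotProduct (Matrix.vecMul a Q) (P.mulVec b) = 1 := by
    rw [Matrix.dotProduct_mulVec, Matrix.vecMul_vecMul, hQP, Matrix.vecMul_one]
    exact ha
  exact this

lemma elem_inv_list {t : ℕ} (L : List (Matrix (Fin t) (Fin t) R)) (hL : ∀ M ∈ L, IsElemMat M) :
    ∃ L' : List (Matrix (Fin t) (Fin t) R), (∀ M ∈ L', IsElemMat M) ∧
      L'.prod * L.prod = 1 ∧ L.prod * L'.prod = 1 := by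
  induction L with
  | nil => exact ⟨[], by simp, by simp, by simp⟩
  | cons M L ih =>
    obtain ⟨L', hL', h1, h2⟩ := ih (fun N hN => hL N (List.mem_cons_of_mem _ hN))
    obtain ⟨i, j, c, hij, rfl⟩ := hL M (List.mem_cons_self)
    have keygen : ∀ c' d' : R, c' + d' = 0 →
        (1 + Matrix.single i j c') * (1 + Matrix.single i j d') = 1 := by
      intro c' d' hcd
      have h0 : Matrix.single i j c' * Matrix.single i j d' = 0 :=
        by simp [Ne.symm hij]
      rw [mul_add, mul_one, add_mul, one_mul, h0, add_zero, add_assoc,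
        ← Matrix.single_add, hcd]
      simp
    have key := keygen c (-c) (by simp)
    have key' := keygen (-c) c (by simp)
    refine ⟨L' ++ [1 + Matrix.single i j (-c)], ?_, ?_, ?_⟩
    · intro N hN
      rcases List.mem_append.mp hN with h | h
      · exact hL' N h
      · simp only [List.mem_singleton] at h
        exact ⟨i, j, -c, hij, h⟩
    · simp only [List.prod_append, List.prod_cons, List.prod_nil, mul_one]
      calc L'.prod * (1 + Matrix.single i j (-c)) *
            ((1 + Matrix.single i j c) * L.prod)
          = L'.prod * ((1 + Matrix.single i j (-c)) *
            (1 + Matrix.single i j c)) * L.prod := by noncomm_ring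
        _ = 1 := by rw [key', mul_one, h1]
    · simp only [List.prod_append, List.prod_cons, List.prod_nil, mul_one]
      calc (1 + Matrix.single i j c) * L.prod *
            (L'.prod * (1 + Matrix.single i j (-c)))
          = (1 + Matrix.single i j c) * (L.prod * L'.prod) *
            (1 + Matrix.single i j (-c)) := by noncomm_ring
        _ = 1 := by rw [h2, mul_one, key]

lemma SRleq.mono {n n' : ℕ} (h : SRleq R n) (hnn : n ≤ n') : SRleq R n' :=
  fun m hm => h m (hnn.trans hm)

lemma ERleq.mono {k k' : ℕ} (h : ERleq R k) (hkk : k ≤ k') : ERleq R k' :=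
  fun t ht => h t (by omega)

lemma srleq_of_sr_le {n : ℕ} (h : sr R ≤ n) : SRleq R n := by
  have h2 : sr R < (n:ℕ∞) + 1 := h.trans_lt (by
    exact_mod_cast lt_add_one n)
  obtain ⟨c, hc, hlt⟩ := sInf_lt_iff.mp h2
  obtain ⟨m, rfl, hm⟩ := hc
  have : m ≤ n := by exact_mod_cast Nat.lt_succ_iff.mp (by exact_mod_cast hlt)
  exact hm.mono this

lemma sr_le_of_srleq {n : ℕ} (h : SRleq R n) : sr R ≤ n := sInf_le ⟨n, rfl, h⟩

lemma er_lt_cases {c : ℕ∞} (h : er R < c) : ∃ k : ℕ, (k:ℕ∞) < c ∧ ERleq R k := by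
  obtain ⟨d, hd, hlt⟩ := sInf_lt_iff.mp h
  obtain ⟨k, rfl, hk⟩ := hd
  exact ⟨k, hlt, hk⟩

lemma er_le_of_erleq {k : ℕ} (h : ERleq R k) : er R ≤ k := sInf_le ⟨k, rfl, h⟩

end Aux
section Aux2
variable {A B : Type*} [Ring A] [Ring B]

lemma map_mulVec (f : B →+* A) {t : ℕ} (M : Matrix (Fin t) (Fin t) B) (v : Fin t → B) :
    (fun i => f ((M.mulVec v) i)) = (M.map f).mulVec (fun i => f (v i)) := by
  funext i
  simp [Matrix.mulVec, dotProduct, Matrix.map_apply]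

lemma unimodular_map (f : B →+* A) {t : ℕ} {b : Fin t → B} (hb : Unimodular b) :
    Unimodular (fun i => f (b i)) := by
  obtain ⟨a, ha⟩ := hb
  exact ⟨fun i => f (a i), by rw [← map_one f, ← ha, map_sum]; simp⟩

lemma lift_elem_list (f : B →+* A) (hf : Function.Surjective f) {t : ℕ}
    (L : List (Matrix (Fin t) (Fin t) A)) (hL : ∀ M ∈ L, IsElemMat M) :
    ∃ L' : List (Matrix (Fin t) (Fin t) B), (∀ M ∈ L', IsElemMat M) ∧
      (L'.prod).map f = L.prod := by
  induction L with
  | nil =>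
    refine ⟨[], by simp, ?_⟩
    simp only [List.prod_nil]
    exact Matrix.map_one f (map_zero f) (map_one f)
  | cons M L ih =>
    obtain ⟨L', hL', hmap⟩ := ih (fun N hN => hL N (List.mem_cons_of_mem _ hN))
    obtain ⟨i, j, c, hij, rfl⟩ := hL M (List.mem_cons_self)
    obtain ⟨c', rfl⟩ := hf c
    refine ⟨(1 + Matrix.single i j c') :: L', ?_, ?_⟩
    · intro N hN
      rcases List.mem_cons.mp hN with h | h
      · exact ⟨i, j, c', hij, h⟩
      · exact hL' N h
    · simp only [List.prod_cons]
      have : ((1 + Matrix.single i j c') * L'.prod).map f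
          = ((1 + Matrix.single i j c').map f) * (L'.prod).map f := by
        exact Matrix.map_mul (f := f)
      rw [this, hmap]
      congr 1
      ext a b
      simp [Matrix.map_apply, Matrix.one_apply, Matrix.single, Matrix.of_apply,
        apply_ite f]

lemma srleq_quotient (f : B →+* A) (hf : Function.Surjective f) {k : ℕ}
    (hB : SRleq B k) : SRleq A k := by
  intro m hm b hb
  obtain ⟨a, ha⟩ := hb
  choose b' hb' using fun i => hf (b i)
  choose a' ha' using fun i => hf (a i)
  set z : B := 1 - ∑ i, a' i * b' i with hz
  have hfz : f z = 0 := by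
    simp only [hz, map_sub, map_one, map_sum, map_mul]
    simp [hb', ha', ha]
  -- column of length m+2
  set c : Fin (m+2) → B := Fin.snoc b' z with hc
  have hcu : Unimodular c := by
    refine ⟨Fin.snoc a' 1, ?_⟩
    rw [Fin.sum_univ_castSucc]
    simp [hc, Fin.snoc_castSucc, Fin.snoc_last, hz]
  obtain ⟨v, hv⟩ := hB (m+1) (by omega) c hcu
  set c2 : Fin (m+1) → B := fun i => c i.castSucc + v i * c (Fin.last (m+1)) with hc2
  have hc2f : ∀ i, f (c2 i) = b i := by
    intro i
    simp only [hc2, hc, map_add, map_mul]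
    simp [Fin.snoc_castSucc, Fin.snoc_last, hfz, hb']
  obtain ⟨w, hw⟩ := hB m hm c2 hv
  refine ⟨fun i => f (w i), ?_⟩
  obtain ⟨r, hr⟩ := hw
  refine ⟨fun i => f (r i), ?_⟩
  have := congrArg f hr
  rw [map_sum, map_one] at this
  rw [← this]
  apply Finset.sum_congr rfl
  intro i _
  simp only [map_mul, map_add]
  rw [hc2f, hc2f]

end Aux2
section Aux3
variable {C B : Type*} [Ring C] [Ring B]

lemma nuh_idem (φ : C →ₙ+* B) : φ 1 * φ 1 = φ 1 := by rw [← map_mul, one_mul]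

lemma nuh_left (φ : C →ₙ+* B) (x : C) : φ 1 * φ x = φ x := by rw [← map_mul, one_mul]

lemma nuh_right (φ : C →ₙ+* B) (x : C) : φ x * φ 1 = φ x := by rw [← map_mul, mul_one]

lemma nuh_orth_left (φ : C →ₙ+* B) (x : C) : (1 - φ 1) * φ x = 0 := by
  rw [sub_mul, one_mul, nuh_left, sub_self]

lemma nuh_orth_right (φ : C →ₙ+* B) (x : C) : φ x * (1 - φ 1) = 0 := by
  rw [mul_sub, mul_one, nuh_right, sub_self]

lemma nuh_D_idem (φ : C →ₙ+* B) : (1 - φ 1) * (1 - φ 1) = 1 - φ 1 := by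
  rw [sub_mul, one_mul, mul_sub, mul_one, nuh_idem, sub_self, sub_zero]

lemma nuh_map_mul (φ : C →ₙ+* B) {t : ℕ} (M N : Matrix (Fin t) (Fin t) C) :
    (M * N).map φ = M.map φ * N.map φ := by
  ext i j
  simp [Matrix.mul_apply, Matrix.map_apply, map_sum]

lemma nuh_map_mulVec (φ : C →ₙ+* B) {t : ℕ} (M : Matrix (Fin t) (Fin t) C) (v : Fin t → C) :
    (fun i => φ ((M.mulVec v) i)) = (M.map φ).mulVec (fun i => φ (v i)) := by
  funext i
  simp [Matrix.mulVec, dotProduct, Matrix.map_apply, map_sum]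

lemma nuh_D_mul_map (φ : C →ₙ+* B) {t : ℕ} (M : Matrix (Fin t) (Fin t) C) :
    Matrix.diagonal (fun _ : Fin t => 1 - φ 1) * M.map φ = 0 := by
  ext i j
  rw [Matrix.diagonal_mul]
  exact nuh_orth_left φ _

lemma nuh_map_mul_D (φ : C →ₙ+* B) {t : ℕ} (M : Matrix (Fin t) (Fin t) C) :
    M.map φ * Matrix.diagonal (fun _ : Fin t => 1 - φ 1) = 0 := by
  ext i j
  rw [Matrix.mul_diagonal]
  exact nuh_orth_right φ _

lemma nuh_D_add_map_mul (φ : C →ₙ+* B) {t : ℕ} (M N : Matrix (Fin t) (Fin t) C) :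
    (Matrix.diagonal (fun _ : Fin t => 1 - φ 1) + M.map φ) *
      (Matrix.diagonal (fun _ : Fin t => 1 - φ 1) + N.map φ)
    = Matrix.diagonal (fun _ : Fin t => 1 - φ 1) + (M * N).map φ := by
  rw [add_mul, mul_add, mul_add, nuh_D_mul_map, nuh_map_mul_D, Matrix.diagonal_mul_diagonal,
    nuh_map_mul]
  have hD : (Matrix.diagonal fun _ : Fin t => (1 - φ 1) * (1 - φ 1))
      = Matrix.diagonal fun _ : Fin t => 1 - φ 1 := by
    simp [nuh_D_idem φ]
  rw [hD]
  abel

lemma nuh_one_eq (φ : C →ₙ+* B) {t : ℕ} :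
    (1 : Matrix (Fin t) (Fin t) B)
      = Matrix.diagonal (fun _ : Fin t => 1 - φ 1) + (1 : Matrix (Fin t) (Fin t) C).map φ := by
  ext i j
  by_cases h : i = j <;>
    simp [Matrix.one_apply, Matrix.diagonal, Matrix.map_apply, h]

lemma nuh_map_add (φ : C →ₙ+* B) {t : ℕ} (M N : Matrix (Fin t) (Fin t) C) :
    (M + N).map φ = M.map φ + N.map φ := by
  ext a b
  simp [Matrix.map_apply, map_add]

lemma nuh_std_map (φ : C →ₙ+* B) {t : ℕ} (i j : Fin t) (x : C) :
    (Matrix.single i j x).map φ = Matrix.single i j (φ x) := by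
  ext a b
  simp [Matrix.single, Matrix.map_apply, Matrix.of_apply, apply_ite φ]

lemma nuh_prod_lift (φ : C →ₙ+* B) {t : ℕ} (L : List (Matrix (Fin t) (Fin t) C))
    (hL : ∀ M ∈ L, IsElemMat M) :
    ∃ L' : List (Matrix (Fin t) (Fin t) B), (∀ M ∈ L', IsElemMat M) ∧
      L'.prod = Matrix.diagonal (fun _ : Fin t => 1 - φ 1) + (L.prod).map φ := by
  induction L with
  | nil =>
    refine ⟨[], by simp, ?_⟩
    simp only [List.prod_nil]
    exact nuh_one_eq φ
  | cons M L ih =>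
    obtain ⟨L', hL', hprod⟩ := ih (fun N hN => hL N (List.mem_cons_of_mem _ hN))
    obtain ⟨i, j, x, hij, rfl⟩ := hL M (List.mem_cons_self)
    refine ⟨(1 + Matrix.single i j (φ x)) :: L', ?_, ?_⟩
    · intro N hN
      rcases List.mem_cons.mp hN with h | h
      · exact ⟨i, j, φ x, hij, h⟩
      · exact hL' N h
    · simp only [List.prod_cons, hprod]
      have h1 : (1 + Matrix.single i j (φ x))
          = Matrix.diagonal (fun _ : Fin t => 1 - φ 1)
            + ((1 : Matrix (Fin t) (Fin t) C) + Matrix.single i j x).map φ := by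
        rw [nuh_map_add, nuh_std_map, ← add_assoc, ← nuh_one_eq]
      rw [h1, nuh_D_add_map_mul]

lemma nuh_mulVec_e1 (φ : C →ₙ+* B) {t : ℕ} (P : Matrix (Fin (t+1)) (Fin (t+1)) C)
    (χ : Fin (t+1) → C) (b' : Fin (t+1) → B)
    (hb' : ∀ i, b' i = (if i = 0 then 1 - φ 1 else 0) + φ (χ i))
    (hP : P.mulVec χ = fun i => if i = 0 then 1 else 0) :
    (Matrix.diagonal (fun _ : Fin (t+1) => 1 - φ 1) + P.map φ).mulVec b'
      = fun i => if i = 0 then 1 else 0 := by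
  have hsplit : b' = (fun i => if i = 0 then 1 - φ 1 else 0) + (fun i => φ (χ i)) := by
    funext i; exact hb' i
  rw [hsplit, Matrix.add_mulVec, Matrix.mulVec_add, Matrix.mulVec_add]
  have h1 : (Matrix.diagonal (fun _ : Fin (t+1) => 1 - φ 1)).mulVec
      (fun i => if i = 0 then (1:B) - φ 1 else 0) = fun i => if i = 0 then 1 - φ 1 else 0 := by
    funext i
    rw [Matrix.mulVec_diagonal]
    by_cases h : i = 0 <;> simp [h, nuh_D_idem φ]
  have h2 : (Matrix.diagonal (fun _ : Fin (t+1) => 1 - φ 1)).mulVec (fun i => φ (χ i)) = 0 := by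
    funext i
    rw [Matrix.mulVec_diagonal]
    simp [nuh_orth_left φ]
  have h3 : (P.map φ).mulVec (fun i => if i = 0 then (1:B) - φ 1 else 0) = 0 := by
    funext i
    have hz : ∀ j, (P.map φ) i j * (if j = 0 then (1:B) - φ 1 else 0) = 0 := by
      intro j
      by_cases h : j = 0 <;> simp [h, Matrix.map_apply, nuh_orth_right φ]
    simp [Matrix.mulVec, dotProduct, hz, Matrix.map_apply, nuh_orth_right φ]
  have h4 : (P.map φ).mulVec (fun i => φ (χ i)) = fun i => if i = 0 then φ 1 else 0 := by
    rw [← nuh_map_mulVec φ P χ]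
    funext i
    rw [congrFun hP i]
    by_cases h : i = 0 <;> simp [h]
  rw [h1, h2, h3, h4]
  funext i
  by_cases h : i = 0 <;> simp [h]
end Aux3
section Aux4

lemma LocalUnit.fix_list {R : Type*} [NonUnitalRing R] {S : Set R} (lu : LocalUnit S)
    (j₀ : lu.ι) (l : List R) (hl : ∀ x ∈ l, x ∈ S) :
    ∃ i, ∀ x ∈ l, lu.e i * x = x ∧ x * lu.e i = x := by
  letI := lu.pre
  induction l with
  | nil => exact ⟨j₀, by simp⟩
  | cons x l ih =>
    obtain ⟨i₁, hi₁⟩ := ih (fun y hy => hl y (List.mem_cons_of_mem _ hy))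
    obtain ⟨i₂, hi₂l, hi₂r⟩ := lu.unit x (hl x (List.mem_cons_self))
    obtain ⟨k, hk1, hk2⟩ := lu.directed i₁ i₂
    have mono : ∀ (i : lu.ι) (y : R), i ≤ k → lu.e i * y = y → y * lu.e i = y →
        lu.e k * y = y ∧ y * lu.e k = y := by
      intro i y hik h1 h2
      obtain ⟨hik1, hik2⟩ := lu.incr i k hik
      constructor
      · rw [← h1, ← mul_assoc, hik2, h1]
      · rw [← h2, mul_assoc, hik1, h2]
    refine ⟨k, ?_⟩
    intro y hy
    rcases List.mem_cons.mp hy with h | h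
    · subst h
      exact mono i₂ y hk2 hi₂r hi₂l
    · obtain ⟨h1, h2⟩ := hi₁ y h
      exact mono i₁ y hk1 h1 h2

variable {A B : Type*} [Ring A] [Ring B]

lemma reach_e1 (f : B →+* A) (hf : Function.Surjective f)
    (lu : LocalUnit ((TwoSidedIdeal.ker f : TwoSidedIdeal B) : Set B))
    (n : ℕ) (herA : ∃ k, k < n ∧ ERleq A k)
    (hcore : ∀ i : lu.ι, ∃ k, k < n ∧ @ERleq (Corner (lu.e i)) (cornerRing (lu.idem i)) k)
    {t : ℕ} (ht : n ≤ t + 1) (b : Fin (t+1) → B) (hb : Unimodular b) :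
    ∃ L : List (Matrix (Fin (t+1)) (Fin (t+1)) B), (∀ M ∈ L, IsElemMat M) ∧
      L.prod.mulVec b = fun i => if i = 0 then 1 else 0 := by
  obtain ⟨k, hk, hA⟩ := herA
  have hbA := unimodular_map f hb
  obtain ⟨LA, hLA, hact⟩ := hA (t+1) (by omega) (fun i => f (b i))
    (fun i => if i = 0 then 1 else 0) hbA unimodular_e1
  obtain ⟨LB, hLB, hmap⟩ := lift_elem_list f hf LA hLA
  obtain ⟨LN, hLN, hNQ, hQN⟩ := elem_inv_list LB hLB
  set b' := LB.prod.mulVec b with hb'def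
  have hb'uni : Unimodular b' := unimodular_mulVec hNQ hb
  have hb'A : (fun i => f (b' i)) = fun i => if i = 0 then 1 else 0 := by
    rw [hb'def, map_mulVec f, hmap, hact]
  set z : B := 1 - b' 0 with hzdef
  have hz : f z = 0 := by
    have := congrFun hb'A 0
    simp only [if_pos rfl] at this
    simp [hzdef, this]
  have hbi : ∀ i : Fin (t+1), i ≠ 0 → f (b' i) = 0 := by
    intro i hi
    have := congrFun hb'A i
    simpa [hi] using this
  obtain ⟨a', ha'⟩ := hb'uni
  -- local unit index
  obtain ⟨j₀, -⟩ := lu.unit 0 (by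
    simp only [SetLike.mem_coe]
    exact zero_mem _)
  set l : List B := z :: List.ofFn (fun i : Fin (t+1) => if i = 0 then 0 else b' i) with hldef
  have hlmem : ∀ x ∈ l, x ∈ ((TwoSidedIdeal.ker f : TwoSidedIdeal B) : Set B) := by
    intro x hx
    simp only [SetLike.mem_coe, TwoSidedIdeal.mem_ker]
    rcases List.mem_cons.mp hx with h | h
    · subst h; exact hz
    · obtain ⟨i, hi⟩ := List.mem_ofFn.mp h
      rw [← hi]
      by_cases h0 : i = 0
      · simp [h0]
      · simpa [h0] using hbi i h0
  obtain ⟨ig, hig⟩ := lu.fix_list j₀ l hlmem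
  set g : B := lu.e ig with hgdef
  have hgz : g * z = z ∧ z * g = z := hig z (List.mem_cons_self)
  have hgb : ∀ i : Fin (t+1), i ≠ 0 → g * b' i = b' i ∧ b' i * g = b' i := by
    intro i hi
    have : b' i ∈ l := by
      rw [hldef]
      refine List.mem_cons_of_mem _ ?_
      refine List.mem_ofFn.mpr ⟨i, ?_⟩
      simp [hi]
    exact hig _ this
  have hgg : g * g = g := lu.idem ig
  letI : Ring (Corner g) := cornerRing (lu.idem ig)
  set φ : Corner g →ₙ+* B :=
    { toFun := Subtype.val, map_add' := fun _ _ => rfl, map_zero' := rfl,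
      map_mul' := fun _ _ => rfl } with hφdef
  have hφ1 : φ 1 = g := rfl
  have hφval : ∀ x : Corner g, φ x = x.1 := fun _ => rfl
  -- corner column
  have hmemχ : ∀ i : Fin (t+1), g * (if i = 0 then g - z else b' i) * g
      = (if i = 0 then g - z else b' i) := by
    intro i
    by_cases h : i = 0
    · rw [if_pos h, mul_sub, hgg, hgz.1, sub_mul, hgg, hgz.2]
    · rw [if_neg h, (hgb i h).1, (hgb i h).2]
  set χ : Fin (t+1) → Corner g := fun i => ⟨if i = 0 then g - z else b' i, hmemχ i⟩ with hχdef
  have hmemτ : ∀ i : Fin (t+1), g * (g * a' i * g) * g = g * a' i * g := by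
    intro i
    rw [← mul_assoc, ← mul_assoc, hgg, mul_assoc, mul_assoc, hgg, ← mul_assoc]
  have hb'0 : b' 0 = 1 - z := by rw [hzdef, sub_sub_cancel]
  have hterm : ∀ i : Fin (t+1), (g * a' i * g) * (χ i).1 = g * (a' i * b' i) * g := by
    intro i
    by_cases h : i = 0
    · subst h
      show (g * a' 0 * g) * (if (0:Fin (t+1)) = 0 then g - z else b' 0) = _
      rw [if_pos rfl]
      have h1 : b' 0 * g = g - z := by rw [hb'0, sub_mul, one_mul, hgz.2]
      calc (g * a' 0 * g) * (g - z) = g * a' 0 * (g * (g - z)) := by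
            rw [mul_assoc (g * a' 0)]
        _ = g * a' 0 * (g - z) := by rw [mul_sub, hgg, hgz.1]
        _ = g * a' 0 * (b' 0 * g) := by rw [h1]
        _ = g * (a' 0 * b' 0) * g := by rw [← mul_assoc, mul_assoc g (a' 0)]
    · show (g * a' i * g) * (if i = 0 then g - z else b' i) = _
      rw [if_neg h]
      calc (g * a' i * g) * b' i = g * a' i * (g * b' i) := by rw [mul_assoc (g * a' i)]
        _ = g * a' i * b' i := by rw [(hgb i h).1]
        _ = g * a' i * (b' i * g) := by rw [(hgb i h).2]
        _ = g * (a' i * b' i) * g := by rw [← mul_assoc, mul_assoc g (a' i)]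
  set τ : Fin (t+1) → Corner g := fun i => ⟨g * a' i * g, hmemτ i⟩ with hτdef
  have hχuni : Unimodular χ := by
    refine ⟨τ, ?_⟩
    apply Subtype.ext
    have hval : (∑ i, τ i * χ i).1 = ∑ i, (g * a' i * g) * (χ i).1 := by
      exact map_sum φ (fun i => τ i * χ i) Finset.univ
    rw [hval]
    have : ∑ i, (g * a' i * g) * (χ i).1 = ∑ i, g * (a' i * b' i) * g := by
      exact Finset.sum_congr rfl (fun i _ => hterm i)
    rw [this]
    have : ∑ i, g * (a' i * b' i) * g = g * (∑ i, a' i * b' i) * g := by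
      rw [Finset.mul_sum, Finset.sum_mul]
    rw [this, ha', mul_one, hgg]
    rfl
  obtain ⟨kc, hkc, hCorner⟩ := hcore ig
  obtain ⟨LC, hLC, hLCact⟩ := hCorner (t+1) (by omega) χ
    (fun i => if i = 0 then 1 else 0) hχuni unimodular_e1
  obtain ⟨LD, hLD, hLDprod⟩ := nuh_prod_lift φ LC hLC
  have hfinal : LD.prod.mulVec b' = fun i => if i = 0 then 1 else 0 := by
    rw [hLDprod]
    refine nuh_mulVec_e1 φ LC.prod χ b' ?_ hLCact
    intro i
    by_cases h : i = 0
    · subst h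
      rw [if_pos rfl, hφ1]
      have hv : φ (χ 0) = g - z := by simp [hχdef, hφval]; rfl
      rw [hv, hb'0]
      abel
    · rw [if_neg h]
      have hv : φ (χ i) = b' i := by simp [hχdef, hφval, h]; rfl
      rw [hv, zero_add]
  refine ⟨LD ++ LB, ?_, ?_⟩
  · intro M hM
    rcases List.mem_append.mp hM with h | h
    · exact hLD M h
    · exact hLB M h
  · rw [List.prod_append, ← Matrix.mulVec_mulVec, ← hb'def, hfinal]

end Aux4
section Aux5
variable {A B : Type*} [Ring A] [Ring B]

lemma snoc_unimod_transport {m : ℕ} {P N : Matrix (Fin m) (Fin m) B} (hNP : N * P = 1)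
    {c : Fin m → B} {s : B} (h : Unimodular (Fin.snoc c s : Fin (m+1) → B)) :
    Unimodular (Fin.snoc (P.mulVec c) s : Fin (m+1) → B) := by
  obtain ⟨a, ha⟩ := h
  rw [Fin.sum_univ_castSucc] at ha
  simp only [Fin.snoc_castSucc, Fin.snoc_last] at ha
  refine ⟨Fin.snoc (Matrix.vecMul (fun i => a i.castSucc) N) (a (Fin.last m)), ?_⟩
  rw [Fin.sum_univ_castSucc]
  simp only [Fin.snoc_castSucc, Fin.snoc_last]
  have : ∑ i : Fin m, Matrix.vecMul (fun i => a i.castSucc) N i * P.mulVec c i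
      = dotProduct (Matrix.vecMul (fun i => a i.castSucc) N) (P.mulVec c) := rfl
  rw [this, Matrix.dotProduct_mulVec, Matrix.vecMul_vecMul, hNP, Matrix.vecMul_one]
  exact ha

lemma srleq_B (f : B →+* A) (hf : Function.Surjective f)
    (lu : LocalUnit ((TwoSidedIdeal.ker f : TwoSidedIdeal B) : Set B))
    (n : ℕ) (hsrA : SRleq A n) (herA : ∃ k, k < n ∧ ERleq A k)
    (hcoresr : ∀ i : lu.ι, @SRleq (Corner (lu.e i)) (cornerRing (lu.idem i)) n) :
    SRleq B n := by
  obtain ⟨k, hk, hA⟩ := herA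
  intro m hm b hb
  have hm1 : 1 ≤ m := by omega
  obtain ⟨m', rfl⟩ : ∃ m', m = m' + 1 := ⟨m - 1, by omega⟩
  -- Step 1 : use SRleq A
  have hbA := unimodular_map f hb
  obtain ⟨vb, hvb⟩ := hsrA (m'+1) hm _ hbA
  choose v hv using fun i : Fin (m'+1) => hf (vb i)
  set s : B := b (Fin.last (m'+1)) with hsdef
  set b1 : Fin (m'+1) → B := fun i => b i.castSucc + v i * s with hb1def
  have hb1A : Unimodular (fun i => f (b1 i)) := by
    have : (fun i => f (b1 i))
        = fun i : Fin (m'+1) => f (b i.castSucc) + vb i * f (b (Fin.last (m'+1))) := by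
      funext i
      simp [hb1def, hv, map_add, map_mul, hsdef]
    rw [this]
    exact hvb
  -- Step 2 : use ERleq A, lift elementary matrices
  obtain ⟨LA, hLA, hact⟩ := hA (m'+1) (by omega) _ (fun i => if i = 0 then 1 else 0)
    hb1A unimodular_e1
  obtain ⟨LB, hLB, hmap⟩ := lift_elem_list f hf LA hLA
  obtain ⟨LN, hLN, hNQ, hQN⟩ := elem_inv_list LB hLB
  set b3 : Fin (m'+1) → B := LB.prod.mulVec b1 with hb3def
  have hb3A : (fun i => f (b3 i)) = fun i => if i = 0 then 1 else 0 := by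
    rw [hb3def, map_mulVec f, hmap, hact]
  -- unimodularity of (b1, s) and (b3, s)
  have hsnoc1 : Unimodular (Fin.snoc b1 s : Fin (m'+2) → B) := by
    obtain ⟨a, ha⟩ := hb
    refine ⟨Fin.snoc (fun i => a i.castSucc)
      (a (Fin.last (m'+1)) - ∑ i, a i.castSucc * v i), ?_⟩
    rw [Fin.sum_univ_castSucc]
    simp only [Fin.snoc_castSucc, Fin.snoc_last]
    have expand : ∀ i : Fin (m'+1), a i.castSucc * b1 i
        = a i.castSucc * b i.castSucc + (a i.castSucc * v i) * s := by
      intro i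
      rw [hb1def]
      rw [mul_add, mul_assoc]
    rw [Finset.sum_congr rfl (fun i _ => expand i), Finset.sum_add_distrib, sub_mul,
      Finset.sum_mul]
    have := ha
    rw [Fin.sum_univ_castSucc] at this
    calc ∑ i : Fin (m'+1), a i.castSucc * b i.castSucc + ∑ i, a i.castSucc * v i * s
        + (a (Fin.last (m'+1)) * s - (∑ i, a i.castSucc * v i * s))
        = ∑ i : Fin (m'+1), a i.castSucc * b i.castSucc + a (Fin.last (m'+1)) * s := by abel
      _ = 1 := by rw [← hsdef] at this; exact this
  have hsnoc3 : Unimodular (Fin.snoc b3 s : Fin (m'+2) → B) :=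
    snoc_unimod_transport hNQ hsnoc1
  -- the Bezout row for (b3, s)
  obtain ⟨ρ, hρ⟩ := hsnoc3
  set r : Fin (m'+1) → B := fun i => ρ i.castSucc with hrdef
  set rm : B := ρ (Fin.last (m'+1)) with hrmdef
  have hrel : ∑ i : Fin (m'+1), r i * b3 i + rm * s = 1 := by
    have h := hρ
    rw [Fin.sum_univ_castSucc] at h
    simp only [Fin.snoc_castSucc, Fin.snoc_last] at h
    simpa only [hrdef, hrmdef] using h
  -- ideal membership
  set z : B := 1 - b3 0 with hzdef
  have hb30 : b3 0 = 1 - z := by rw [hzdef, sub_sub_cancel]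
  have hfz : f z = 0 := by
    have := congrFun hb3A 0
    simp only [if_pos rfl] at this
    simp [hzdef, this]
  have hfb3 : ∀ i : Fin (m'+1), i ≠ 0 → f (b3 i) = 0 := by
    intro i hi
    have := congrFun hb3A i
    simpa [hi] using this
  -- local unit
  obtain ⟨j₀, -⟩ := lu.unit 0 (by
    simp only [SetLike.mem_coe]
    exact zero_mem _)
  set l : List B := z :: (z * rm * s) ::
    (List.ofFn (fun i : Fin (m'+1) => if i = 0 then 0 else b3 i)
      ++ List.ofFn (fun i : Fin (m'+1) => z * r i)) with hldef
  have hlmem : ∀ x ∈ l, x ∈ ((TwoSidedIdeal.ker f : TwoSidedIdeal B) : Set B) := by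
    intro x hx
    simp only [SetLike.mem_coe, TwoSidedIdeal.mem_ker]
    rcases List.mem_cons.mp hx with h | hx
    · subst h; exact hfz
    rcases List.mem_cons.mp hx with h | hx
    · subst h; simp [hfz]
    rcases List.mem_append.mp hx with h | h
    · obtain ⟨i, hi⟩ := List.mem_ofFn.mp h
      rw [← hi]
      by_cases h0 : i = 0
      · simp [h0]
      · simpa [h0] using hfb3 i h0
    · obtain ⟨i, hi⟩ := List.mem_ofFn.mp h
      rw [← hi]
      simp [hfz]
  obtain ⟨ig, hig⟩ := lu.fix_list j₀ l hlmem
  set g : B := lu.e ig with hgdef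
  have hgg : g * g = g := lu.idem ig
  have hgz : g * z = z ∧ z * g = z := hig z (List.mem_cons_self)
  have hgzrms : g * (z * rm * s) = z * rm * s ∧ (z * rm * s) * g = z * rm * s :=
    hig _ (List.mem_cons_of_mem _ (List.mem_cons_self))
  have hgb3 : ∀ i : Fin (m'+1), i ≠ 0 → g * b3 i = b3 i ∧ b3 i * g = b3 i := by
    intro i hi
    refine hig _ ?_
    rw [hldef]
    refine List.mem_cons_of_mem _ (List.mem_cons_of_mem _ (List.mem_append.mpr (Or.inl ?_)))
    refine List.mem_ofFn.mpr ⟨i, ?_⟩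
    simp [hi]
  have hgzr : ∀ i : Fin (m'+1), g * (z * r i) = z * r i ∧ (z * r i) * g = z * r i := by
    intro i
    refine hig _ ?_
    rw [hldef]
    refine List.mem_cons_of_mem _ (List.mem_cons_of_mem _ (List.mem_append.mpr (Or.inr ?_)))
    exact List.mem_ofFn.mpr ⟨i, rfl⟩
  letI : Ring (Corner g) := cornerRing (lu.idem ig)
  set φ : Corner g →ₙ+* B :=
    { toFun := Subtype.val, map_add' := fun _ _ => rfl, map_zero' := rfl,
      map_mul' := fun _ _ => rfl } with hφdef
  -- corner column
  have hmemχ' : ∀ i : Fin (m'+1), g * (if i = 0 then g - z else b3 i) * g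
      = (if i = 0 then g - z else b3 i) := by
    intro i
    by_cases h : i = 0
    · rw [if_pos h, mul_sub, hgg, hgz.1, sub_mul, hgg, hgz.2]
    · rw [if_neg h, (hgb3 i h).1, (hgb3 i h).2]
  set χ' : Fin (m'+1) → Corner g := fun i => ⟨if i = 0 then g - z else b3 i, hmemχ' i⟩
    with hχ'def
  have hmemχm : g * (z * rm * s) * g = z * rm * s := by rw [hgzrms.1, hgzrms.2]
  set χm : Corner g := ⟨z * rm * s, hmemχm⟩ with hχmdef
  set χ : Fin (m'+2) → Corner g := Fin.snoc χ' χm with hχdef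
  -- the corner Bezout row
  have hmemτ' : ∀ i : Fin (m'+1),
      g * (if i = 0 then g + z * r 0 else z * r i) * g
        = (if i = 0 then g + z * r 0 else z * r i) := by
    intro i
    by_cases h : i = 0
    · rw [if_pos h, mul_add, hgg, (hgzr 0).1, add_mul, hgg, (hgzr 0).2]
    · rw [if_neg h, (hgzr i).1, (hgzr i).2]
  set τ' : Fin (m'+1) → Corner g := fun i => ⟨if i = 0 then g + z * r 0 else z * r i, hmemτ' i⟩
    with hτ'def
  set τ : Fin (m'+2) → Corner g := Fin.snoc τ' 1 with hτdef
  have hterm : ∀ i : Fin (m'+1), (τ' i).1 * (χ' i).1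
      = (if i = 0 then g - z else 0) + z * (r i * b3 i) := by
    intro i
    by_cases h : i = 0
    · subst h
      show (if (0 : Fin (m'+1)) = 0 then g + z * r 0 else z * r 0)
          * (if (0 : Fin (m'+1)) = 0 then g - z else b3 0) = _
      rw [if_pos rfl, if_pos rfl, if_pos rfl]
      have h1 : (g + z * r 0) * (g - z)
          = g * g - g * z + (z * r 0) * g - (z * r 0) * z := by noncomm_ring
      rw [h1, hgg, hgz.1, (hgzr 0).2, hb30]
      have : z * (r 0 * (1 - z)) = z * r 0 - z * r 0 * z := by noncomm_ring
      rw [this]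
      abel
    · show (if i = 0 then g + z * r 0 else z * r i) * (if i = 0 then g - z else b3 i) = _
      simp only [if_neg h]
      rw [zero_add, mul_assoc]
  have hχuni : Unimodular χ := by
    refine ⟨τ, ?_⟩
    apply Subtype.ext
    have hval : (∑ i, τ i * χ i).1 = ∑ i, (τ i).1 * (χ i).1 :=
      map_sum φ (fun i => τ i * χ i) Finset.univ
    rw [hval, Fin.sum_univ_castSucc]
    simp only [hχdef, hτdef, Fin.snoc_castSucc, Fin.snoc_last]
    have h1 : ∑ i : Fin (m'+1), (τ' i).1 * (χ' i).1
        = ∑ i : Fin (m'+1), ((if i = 0 then g - z else 0) + z * (r i * b3 i)) :=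
      Finset.sum_congr rfl (fun i _ => hterm i)
    rw [h1, Finset.sum_add_distrib]
    have h2 : ∑ i : Fin (m'+1), (if i = 0 then g - z else (0:B)) = g - z := by
      rw [Finset.sum_ite_eq' Finset.univ 0 (fun _ => g - z)]
      simp
    have h3 : ((1 : Corner g)).1 * (χm).1 = z * (rm * s) := by
      show g * (z * rm * s) = z * (rm * s)
      rw [hgzrms.1, mul_assoc]
    rw [h2, h3]
    have h4 : ∑ i : Fin (m'+1), z * (r i * b3 i) = z * ∑ i : Fin (m'+1), r i * b3 i := by
      rw [Finset.mul_sum]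
    rw [h4, add_assoc, ← mul_add, hrel, mul_one]
    show g - z + z = (1 : Corner g).1
    show g - z + z = g
    abel
  -- apply corner stable rank
  obtain ⟨vc, hvc⟩ := hcoresr ig (m'+1) hm χ hχuni
  have hred : Unimodular (fun i : Fin (m'+1) => χ' i + vc i * χm) := by
    have : (fun i : Fin (m'+1) => χ i.castSucc + vc i * χ (Fin.last (m'+1)))
        = fun i : Fin (m'+1) => χ' i + vc i * χm := by
      funext i
      simp only [hχdef, Fin.snoc_castSucc, Fin.snoc_last]
    rwa [this] at hvc
  obtain ⟨θ, hθ⟩ := hred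
  -- back to B
  set w : Fin (m'+1) → B := fun i => (vc i).1 * (z * rm) with hwdef
  set d : Fin (m'+1) → B := fun i => b3 i + w i * s with hddef
  have hdkey : ∀ i : Fin (m'+1),
      d i = (if i = 0 then (1:B) - g else 0) + (χ' i + vc i * χm).1 := by
    intro i
    have hval : (χ' i + vc i * χm).1 = (χ' i).1 + (vc i).1 * (χm).1 := rfl
    by_cases h : i = 0
    · subst h
      rw [if_pos rfl, hval, hddef]
      show b3 0 + w 0 * s = 1 - g + ((if (0:Fin (m'+1)) = 0 then g - z else b3 0) + (vc 0).1 * (z * rm * s))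
      rw [if_pos rfl, hb30, hwdef]
      have : (vc 0).1 * (z * rm) * s = (vc 0).1 * (z * rm * s) := by
        rw [mul_assoc]
      rw [this]
      abel
    · rw [if_neg h, hval, hddef]
      show b3 i + w i * s = 0 + ((if i = 0 then g - z else b3 i) + (vc i).1 * (z * rm * s))
      rw [if_neg h, hwdef, zero_add, mul_assoc]
  have hdu : Unimodular d := by
    refine ⟨fun i => (if i = 0 then (1:B) - g else 0) + (θ i).1, ?_⟩
    have hterm2 : ∀ i : Fin (m'+1),
        ((if i = 0 then (1:B) - g else 0) + (θ i).1) * d i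
          = (if i = 0 then (1:B) - g else 0) + (θ i).1 * (χ' i + vc i * χm).1 := by
      intro i
      rw [hdkey i]
      have hcv : ∀ x : Corner g, (1 - g) * x.1 = 0 := by
        intro x
        have : g * x.1 = x.1 := by
          conv_lhs => rw [← x.2]
          rw [← mul_assoc, ← mul_assoc, hgg, x.2]
        rw [sub_mul, one_mul, this, sub_self]
      have hvc2 : ∀ x : Corner g, x.1 * (1 - g) = 0 := by
        intro x
        have : x.1 * g = x.1 := by
          conv_lhs => rw [← x.2]
          rw [mul_assoc, hgg, x.2]
        rw [mul_sub, mul_one, this, sub_self]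
      by_cases h : i = 0
      · subst h
        rw [if_pos rfl]
        rw [add_mul, mul_add, mul_add]
        rw [hcv, hvc2 (θ 0)]
        have : (1 - g) * (1 - g) = 1 - g := by
          rw [sub_mul, one_mul, mul_sub, mul_one, hgg, sub_self, sub_zero]
        rw [this]
        abel
      · simp [if_neg h]
    rw [Finset.sum_congr rfl (fun i _ => hterm2 i), Finset.sum_add_distrib]
    have h2 : ∑ i : Fin (m'+1), (if i = 0 then (1:B) - g else (0:B)) = 1 - g := by
      rw [Finset.sum_ite_eq' Finset.univ 0 (fun _ => (1:B) - g)]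
      simp
    have h3 : ∑ i : Fin (m'+1), (θ i).1 * (χ' i + vc i * χm).1 = g := by
      have hval : (∑ i, θ i * (χ' i + vc i * χm)).1
          = ∑ i, (θ i).1 * (χ' i + vc i * χm).1 :=
        map_sum φ (fun i => θ i * (χ' i + vc i * χm)) Finset.univ
      rw [← hval, hθ]
      rfl
    rw [h2, h3, sub_add_cancel]
  -- transport back through N
  have hNdu : Unimodular (LN.prod.mulVec d) := unimodular_mulVec hQN hdu
  have hNd : LN.prod.mulVec d = fun i => b1 i + (LN.prod.mulVec w) i * s := by
    have hsplit : d = fun i => b3 i + (fun j => w j * s) i := by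
      funext i; rw [hddef]
    rw [hsplit]
    have : LN.prod.mulVec (fun i => b3 i + (fun j => w j * s) i)
        = LN.prod.mulVec b3 + LN.prod.mulVec (fun j => w j * s) := by
      rw [← Matrix.mulVec_add]
      rfl
    rw [this]
    funext i
    have h1 : LN.prod.mulVec b3 = b1 := by
      rw [hb3def, Matrix.mulVec_mulVec, hNQ, Matrix.one_mulVec]
    have h2 : LN.prod.mulVec (fun j => w j * s) i = (LN.prod.mulVec w) i * s := by
      simp only [Matrix.mulVec, dotProduct, Finset.sum_mul, mul_assoc]
    rw [h1]
    show b1 i + LN.prod.mulVec (fun j => w j * s) i = b1 i + LN.prod.mulVec w i * s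
    rw [h2]
  rw [hNd] at hNdu
  refine ⟨fun i => v i + LN.prod.mulVec w i, ?_⟩
  have : (fun i : Fin (m'+1) => b i.castSucc + (v i + LN.prod.mulVec w i) * b (Fin.last (m'+1)))
      = fun i => b1 i + LN.prod.mulVec w i * s := by
    funext i
    rw [hb1def, hsdef]
    show b i.castSucc + (v i + LN.prod.mulVec w i) * b (Fin.last (m'+1))
      = b i.castSucc + v i * b (Fin.last (m'+1)) + LN.prod.mulVec w i * b (Fin.last (m'+1))
    rw [add_mul, add_assoc]
  rw [this]
  exact hNdu

end Aux5

/-- Lemma 1.8(3): let `A` be unital with `sr(A) = n` and `er(A) < n`, and let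
`0 → I → B → A → 0` be a unital extension.  If `I` has a local unit `(g_i)` of idempotents
with `sr(g_i I g_i) ≤ n` and `er(g_i I g_i) < n` for all `i`, then `sr(B) = n` and
`er(B) < n`. -/
theorem sr_er_extension_with_local_unit
    {A B : Type*} [Ring A] [Ring B] (n : ℕ)
    (hsr : sr A = n) (her : er A < (n : ℕ∞))
    (f : B →+* A) (hf : Function.Surjective f)
    (lu : LocalUnit ((TwoSidedIdeal.ker f : TwoSidedIdeal B) : Set B))
    (hcorner : ∀ i : lu.ι,
      @sr (Corner (lu.e i)) (cornerRing (lu.idem i)) ≤ (n : ℕ∞) ∧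
      @er (Corner (lu.e i)) (cornerRing (lu.idem i)) < (n : ℕ∞)) :
    sr B = n ∧ er B < n := by
  have hn1 : 1 ≤ n := by
    by_contra h
    have hn0 : n = 0 := by omega
    subst hn0
    simp at her
  have hsrA : SRleq A n := srleq_of_sr_le (le_of_eq hsr)
  have herA : ∃ k, k < n ∧ ERleq A k := by
    obtain ⟨k, hk, h⟩ := er_lt_cases her
    exact ⟨k, by exact_mod_cast hk, h⟩
  have hcoreER : ∀ i : lu.ι, ∃ k, k < n ∧
      @ERleq (Corner (lu.e i)) (cornerRing (lu.idem i)) k := by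
    intro i
    obtain ⟨k, hk, h⟩ := @er_lt_cases _ (cornerRing (lu.idem i)) _ (hcorner i).2
    exact ⟨k, by exact_mod_cast hk, h⟩
  have hcoreSR : ∀ i : lu.ι, @SRleq (Corner (lu.e i)) (cornerRing (lu.idem i)) n :=
    fun i => @srleq_of_sr_le _ (cornerRing (lu.idem i)) _ ((hcorner i).1)
  have hERB : ERleq B (n-1) := by
    intro t ht bb cc hbb hcc
    obtain ⟨t', rfl⟩ : ∃ t', t = t'+1 := ⟨t-1, by omega⟩
    obtain ⟨Lb, hLb, hLbact⟩ := reach_e1 f hf lu n herA hcoreER (by omega) bb hbb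
    obtain ⟨Lc, hLc, hLcact⟩ := reach_e1 f hf lu n herA hcoreER (by omega) cc hcc
    obtain ⟨Lc', hLc', hinv, -⟩ := elem_inv_list Lc hLc
    refine ⟨Lc' ++ Lb, ?_, ?_⟩
    · intro M hM
      rcases List.mem_append.mp hM with h | h
      · exact hLc' M h
      · exact hLb M h
    · rw [List.prod_append, ← Matrix.mulVec_mulVec, hLbact, ← hLcact,
        Matrix.mulVec_mulVec, hinv, Matrix.one_mulVec]
  have hSRB : SRleq B n := srleq_B f hf lu n hsrA herA hcoreSR
  constructor
  · apply le_antisymm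
    · exact sr_le_of_srleq hSRB
    · refine le_sInf ?_
      rintro c ⟨mB, rfl, hmB⟩
      have h1 : sr A ≤ mB := sr_le_of_srleq (srleq_quotient f hf hmB)
      rw [hsr] at h1
      exact_mod_cast h1
  · have h2 : er B ≤ ((n-1 : ℕ) : ℕ∞) := er_le_of_erleq hERB
    refine lt_of_le_of_lt h2 ?_
    exact_mod_cast (by omega : n - 1 < n)
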